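/- Let F : ℝ^n → ℝ^m be C², R : ℝ^n → ℝ^n a map with R(x) = x and such that lim_{t→0⁺} (R applied along x + tv minus x)/t = v (first-order retraction property at x in direction v). Suppose DF(x)v < 0 componentwise and let β₀ > 0, β ∈ (0,1), σ ∈ (0,1). Then there exists K ∈ ℕ such that for all k > K, F(R(x + β₀β^k v)) < F(x) + σβ₀β^k DF(x)v componentwise. -/

import Mathlib

open Filter Topology

/-- Existence of the Armijo step length along a retraction: if `R(x) = x`,
`(R(x + tv) - x)/t → v` as `t → 0⁺`, and `DF(x)v < 0` componentwise, then for all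
sufficiently large `k` the Armijo inequality holds componentwise for step `β₀βᵏ`. -/
theorem armijo_step_retraction (n m : ℕ)
    (F : EuclideanSpace ℝ (Fin n) → EuclideanSpace ℝ (Fin m))
    (hF : ContDiff ℝ 2 F)
    (R : EuclideanSpace ℝ (Fin n) → EuclideanSpace ℝ (Fin n))
    (x v : EuclideanSpace ℝ (Fin n)) (hRx : R x = x)
    (hR : Tendsto (fun t : ℝ => t⁻¹ • (R (x + t • v) - x))
      (nhdsWithin 0 (Set.Ioi 0)) (𝓝 v))
    (hdesc : ∀ i, fderiv ℝ F x v i < 0)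
    (β₀ β σ : ℝ) (hβ₀ : 0 < β₀) (hβ : β ∈ Set.Ioo (0 : ℝ) 1)
    (hσ : σ ∈ Set.Ioo (0 : ℝ) 1) :
    ∃ K : ℕ, ∀ k > K, ∀ i,
      F (R (x + (β₀ * β ^ k) • v)) i <
        F x i + σ * (β₀ * β ^ k) * fderiv ℝ F x v i := by
  set c : ℝ → EuclideanSpace ℝ (Fin n) := fun t => R (x + t • v) with hc
  have hc0 : c 0 = x := by simp [hc, hRx]
  have hdiff : Set.Ioi (0:ℝ) \ {0} = Set.Ioi 0 := by
    apply Set.diff_singleton_eq_self; simp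
  -- c has right derivative v at 0
  have hderc : HasDerivWithinAt c v (Set.Ioi 0) 0 := by
    rw [hasDerivWithinAt_iff_tendsto_slope, hdiff]
    have : (slope c 0) = fun t : ℝ => t⁻¹ • (R (x + t • v) - x) := by
      funext t
      simp [slope, hc, vsub_eq_sub, hRx]
    rw [this]
    exact hR
  -- F has a derivative at x
  have hFd : HasFDerivAt F (fderiv ℝ F x) x :=
    ((hF.differentiable (by norm_num)) x).hasFDerivAt
  have hFd' : HasFDerivAt F (fderiv ℝ F x) (c 0) := hc0 ▸ hFd
  have hcomp : HasDerivWithinAt (F ∘ c) (fderiv ℝ F x v) (Set.Ioi 0) 0 :=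
    hFd'.comp_hasDerivWithinAt 0 hderc
  have hslope : Tendsto (fun t : ℝ => t⁻¹ • (F (c t) - F x))
      (𝓝[Set.Ioi 0] 0) (𝓝 (fderiv ℝ F x v)) := by
    have := (hasDerivWithinAt_iff_tendsto_slope.mp hcomp)
    rw [hdiff] at this
    have heq : (slope (F ∘ c) 0) = fun t : ℝ => t⁻¹ • (F (c t) - F x) := by
      funext t
      simp [slope, hc0, vsub_eq_sub, Function.comp]
    rwa [heq] at this
  -- componentwise
  have hcomponent : ∀ i, Tendsto (fun t : ℝ => t⁻¹ * (F (c t) i - F x i))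
      (𝓝[Set.Ioi 0] 0) (𝓝 (fderiv ℝ F x v i)) := by
    intro i
    have := ((EuclideanSpace.proj i).continuous.tendsto _).comp hslope
    simpa [Function.comp_def] using this
  have key : ∀ᶠ t in 𝓝[Set.Ioi 0] 0, ∀ i,
      F (c t) i < F x i + σ * t * fderiv ℝ F x v i := by
    rw [eventually_all]
    intro i
    have hlt : fderiv ℝ F x v i < σ * fderiv ℝ F x v i := by
      nlinarith [hdesc i, hσ.1, hσ.2]
    have h1 : ∀ᶠ t in 𝓝[Set.Ioi 0] 0,
        t⁻¹ * (F (c t) i - F x i) < σ * fderiv ℝ F x v i :=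
      (hcomponent i).eventually_lt_const hlt
    have h2 : ∀ᶠ t in 𝓝[Set.Ioi 0] 0, t ∈ Set.Ioi (0:ℝ) :=
      self_mem_nhdsWithin
    filter_upwards [h1, h2] with t h1 h2
    have ht : (0:ℝ) < t := h2
    rw [inv_mul_eq_div, div_lt_iff₀ ht] at h1
    nlinarith [h1]
  -- the sequence β₀ β^k tends to 0 from the right
  have hseq : Tendsto (fun k : ℕ => β₀ * β ^ k) atTop (𝓝[Set.Ioi 0] 0) := by
    apply tendsto_nhdsWithin_of_tendsto_nhds_of_eventually_within
    · have := (tendsto_pow_atTop_nhds_zero_of_lt_one hβ.1.le hβ.2).const_mul β₀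
      simpa using this
    · filter_upwards with k
      exact mul_pos hβ₀ (pow_pos hβ.1 k)
  have := hseq.eventually key
  rw [eventually_atTop] at this
  obtain ⟨K, hK⟩ := this
  exact ⟨K, fun k hk i => hK k hk.le i⟩
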